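/- For every x > 0 and every finite sequence of real numbers γ₁, ..., γ_N, one has ∫_{−∞}^{∞} | ∑_{j=1}^N x^{iγ_j}/(1 + (t − γ_j)²) |² dt = (π/2) ∑_{j=1}^N ∑_{k=1}^N x^{i(γ_j − γ_k)} · 4/(4 + (γ_j − γ_k)²). -/

import Mathlib

open Complex Filter MeasureTheory Real Set

open Topology

noncomputable section

lemma integrable_aux (c : ℝ) : Integrable fun s : ℝ => ((1 + (s - c) ^ 2) * (1 + s ^ 2))⁻¹ := by
  have hcont : Continuous fun s : ℝ => ((1 + (s - c) ^ 2) * (1 + s ^ 2))⁻¹ := by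
    apply Continuous.inv₀ (by continuity) (fun s => by positivity)
  refine integrable_inv_one_add_sq.mono hcont.aestronglyMeasurable (ae_of_all _ fun s => ?_)
  have h1 : (0:ℝ) < 1 + s ^ 2 := by positivity
  have h2 : (0:ℝ) < (1 + (s - c) ^ 2) * (1 + s ^ 2) := by positivity
  rw [Real.norm_eq_abs, Real.norm_eq_abs, abs_of_pos (by positivity), abs_of_pos (by positivity)]
  apply inv_anti₀ h1
  nlinarith [sq_nonneg (s - c)]

lemma ratio_tendsto_top (c : ℝ) :
    Tendsto (fun s : ℝ => (1 + s ^ 2) / (1 + (s - c) ^ 2)) atTop (𝓝 1) := by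
  have h0 : Tendsto (fun s : ℝ => s⁻¹) atTop (𝓝 0) := tendsto_inv_atTop_zero
  have hn : Tendsto (fun s : ℝ => s⁻¹ * s⁻¹ + 1) atTop (𝓝 1) := by
    simpa using (h0.mul h0).add_const 1
  have hd : Tendsto (fun s : ℝ => s⁻¹ * s⁻¹ + (1 - c * s⁻¹) ^ 2) atTop (𝓝 1) := by
    have := (h0.mul h0).add (((h0.const_mul c).const_sub 1).pow 2)
    simpa using this
  have h := hn.div hd one_ne_zero
  rw [div_one] at h
  refine h.congr' ?_
  filter_upwards [eventually_gt_atTop (0:ℝ)] with s hs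
  simp only [Pi.div_apply]
  field_simp

lemma logdiff_tendsto_top (c : ℝ) :
    Tendsto (fun s : ℝ => Real.log (1 + s ^ 2) - Real.log (1 + (s - c) ^ 2)) atTop (𝓝 0) := by
  have h := (Real.continuousAt_log one_ne_zero).tendsto.comp (ratio_tendsto_top c)
  rw [Real.log_one] at h
  refine h.congr fun s => ?_
  rw [Function.comp_apply, Real.log_div (by positivity) (by positivity)]

lemma logdiff_tendsto_bot (c : ℝ) :
    Tendsto (fun s : ℝ => Real.log (1 + s ^ 2) - Real.log (1 + (s - c) ^ 2)) atBot (𝓝 0) := by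
  have h := (logdiff_tendsto_top (-c)).comp tendsto_neg_atBot_atTop
  refine h.congr fun s => ?_
  simp only [Function.comp_apply]
  congr 2 <;> ring

lemma arctan_top (c : ℝ) : Tendsto (fun s : ℝ => Real.arctan (s - c)) atTop (𝓝 (π/2)) := by
  have := (Real.tendsto_arctan_atTop.mono_right nhdsWithin_le_nhds).comp
    (tendsto_atTop_add_const_right atTop (-c) tendsto_id)
  simpa [Function.comp_def, sub_eq_add_neg] using this

lemma arctan_bot (c : ℝ) : Tendsto (fun s : ℝ => Real.arctan (s - c)) atBot (𝓝 (-(π/2))) := by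
  have := (Real.tendsto_arctan_atBot.mono_right nhdsWithin_le_nhds).comp
    (tendsto_atBot_add_const_right atBot (-c) tendsto_id)
  simpa [Function.comp_def, sub_eq_add_neg] using this

lemma hasDerivAt_log_one_add_sq (a s : ℝ) :
    HasDerivAt (fun s : ℝ => Real.log (1 + (s - a) ^ 2)) (2 * (s - a) / (1 + (s - a) ^ 2)) s := by
  have hin : HasDerivAt (fun s : ℝ => 1 + (s - a) ^ 2) (2 * (s - a)) s := by
    have h1 : HasDerivAt (fun s : ℝ => s - a) 1 s := (hasDerivAt_id s).sub_const a
    have := (h1.pow 2).const_add 1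
    simpa using this
  have := (Real.hasDerivAt_log (by positivity : (0:ℝ) < 1 + (s - a)^2).ne').comp s hin
  simpa [Function.comp_def, div_eq_inv_mul, mul_comm] using this

lemma key_ne (c : ℝ) (hc : c ≠ 0) :
    (∫ s : ℝ, ((1 + (s - c) ^ 2) * (1 + s ^ 2))⁻¹) = 2 * π / (4 + c ^ 2) := by
  set β : ℝ := (4 + c ^ 2)⁻¹ with hβ
  set α : ℝ := 2 * β / c with hα
  set F : ℝ → ℝ := fun s => α / 2 * (Real.log (1 + s ^ 2) - Real.log (1 + (s - c) ^ 2))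
      + β * (Real.arctan s + Real.arctan (s - c)) with hF
  have hD : (4:ℝ) + c ^ 2 ≠ 0 := by positivity
  have hderiv : ∀ s : ℝ, HasDerivAt F (((1 + (s - c) ^ 2) * (1 + s ^ 2))⁻¹) s := by
    intro s
    have h1 : HasDerivAt (fun s : ℝ => Real.log (1 + s ^ 2)) (2 * s / (1 + s ^ 2)) s := by
      simpa using hasDerivAt_log_one_add_sq 0 s
    have h2 := hasDerivAt_log_one_add_sq c s
    have h3 := Real.hasDerivAt_arctan s
    have h4 : HasDerivAt (fun s : ℝ => Real.arctan (s - c)) (1 / (1 + (s - c) ^ 2)) s := by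
      have := (Real.hasDerivAt_arctan (s - c)).comp s ((hasDerivAt_id s).sub_const c)
      simpa [Function.comp_def] using this
    have := (((h1.sub h2).const_mul (α / 2))).add ((h3.add h4).const_mul β)
    refine HasDerivAt.congr_deriv this ?_
    have hp1 : (0:ℝ) < 1 + s ^ 2 := by positivity
    have hp2 : (0:ℝ) < 1 + (s - c) ^ 2 := by positivity
    rw [hα, hβ]
    field_simp
    ring
  have htop : Tendsto F atTop (𝓝 (β * π)) := by
    have h1 := (logdiff_tendsto_top c).const_mul (α / 2)
    have h2 := ((Real.tendsto_arctan_atTop.mono_right nhdsWithin_le_nhds).add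
      (arctan_top c)).const_mul β
    have := h1.add h2
    simp only [mul_zero] at this
    convert this using 2 <;> ring
  have hbot : Tendsto F atBot (𝓝 (-(β * π))) := by
    have h1 := (logdiff_tendsto_bot c).const_mul (α / 2)
    have h2 := ((Real.tendsto_arctan_atBot.mono_right nhdsWithin_le_nhds).add
      (arctan_bot c)).const_mul β
    have := h1.add h2
    simp only [mul_zero] at this
    convert this using 2 <;> ring
  have := MeasureTheory.integral_of_hasDerivAt_of_tendsto hderiv (integrable_aux c) hbot htop
  rw [this, hβ]
  field_simp
  ring
lemma frac_tendsto_top : Tendsto (fun s : ℝ => s / (1 + s ^ 2)) atTop (𝓝 0) := by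
  have h0 : Tendsto (fun s : ℝ => s⁻¹) atTop (𝓝 0) := tendsto_inv_atTop_zero
  have hd : Tendsto (fun s : ℝ => s⁻¹ * s⁻¹ + 1) atTop (𝓝 1) := by
    simpa using (h0.mul h0).add_const 1
  have h := h0.div hd one_ne_zero
  rw [div_one] at h
  refine h.congr' ?_
  filter_upwards [eventually_gt_atTop (0:ℝ)] with s hs
  simp only [Pi.div_apply]
  field_simp

lemma frac_tendsto_bot : Tendsto (fun s : ℝ => s / (1 + s ^ 2)) atBot (𝓝 0) := by
  have h := (frac_tendsto_top.comp tendsto_neg_atBot_atTop).neg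
  rw [neg_zero] at h
  refine h.congr fun s => ?_
  simp only [Function.comp_apply]
  rw [neg_pow, ← neg_div]
  ring_nf

lemma key_zero : (∫ s : ℝ, ((1 + (s - 0) ^ 2) * (1 + s ^ 2))⁻¹) = 2 * π / (4 + 0 ^ 2) := by
  set F : ℝ → ℝ := fun s => (Real.arctan s + s / (1 + s ^ 2)) / 2 with hF
  have hderiv : ∀ s : ℝ, HasDerivAt F (((1 + (s - 0) ^ 2) * (1 + s ^ 2))⁻¹) s := by
    intro s
    have hp : (0:ℝ) < 1 + s ^ 2 := by positivity
    have h1 : HasDerivAt (fun s : ℝ => 1 + s ^ 2) (2 * s) s := by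
      simpa using (((hasDerivAt_id s).pow 2).const_add 1)
    have h2 := (hasDerivAt_id s).div h1 hp.ne'
    have := ((Real.hasDerivAt_arctan s).add h2).div_const 2
    refine HasDerivAt.congr_deriv this ?_
    simp only [id]
    field_simp
    ring
  have htop : Tendsto F atTop (𝓝 (π / 4)) := by
    have := ((Real.tendsto_arctan_atTop.mono_right nhdsWithin_le_nhds).add
      frac_tendsto_top).div_const 2
    convert this using 2
    ring
  have hbot : Tendsto F atBot (𝓝 (-(π / 4))) := by
    have := ((Real.tendsto_arctan_atBot.mono_right nhdsWithin_le_nhds).add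
      frac_tendsto_bot).div_const 2
    convert this using 2
    ring
  have := MeasureTheory.integral_of_hasDerivAt_of_tendsto hderiv (integrable_aux 0) hbot htop
  rw [this]
  ring

lemma key (a b : ℝ) :
    (∫ t : ℝ, ((1 + (t - a) ^ 2) * (1 + (t - b) ^ 2))⁻¹) = 2 * π / (4 + (a - b) ^ 2) := by
  have h : (∫ s : ℝ, ((1 + (s - (a - b)) ^ 2) * (1 + s ^ 2))⁻¹) = 2 * π / (4 + (a - b) ^ 2) := by
    rcases eq_or_ne (a - b) 0 with h0 | h0
    · rw [h0]; exact key_zero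
    · exact key_ne _ h0
  rw [← h, ← integral_sub_right_eq_self (fun s : ℝ => ((1 + (s - (a - b)) ^ 2) * (1 + s ^ 2))⁻¹) b]
  congr 1
  ext t
  ring_nf
lemma term_eq (L a b t : ℝ) :
    (Complex.exp (Complex.I * (a : ℂ) * (L : ℂ)) / (((1 + (t - a) ^ 2 : ℝ)) : ℂ)) *
      (starRingEnd ℂ) (Complex.exp (Complex.I * (b : ℂ) * (L : ℂ)) / (((1 + (t - b) ^ 2 : ℝ)) : ℂ))
    = Complex.exp (Complex.I * ((a - b : ℝ) : ℂ) * (L : ℂ)) *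
      ((((1 + (t - a) ^ 2) * (1 + (t - b) ^ 2))⁻¹ : ℝ) : ℂ) := by
  rw [map_div₀, ← Complex.exp_conj]
  simp only [map_mul, Complex.conj_I, Complex.conj_ofReal]
  rw [div_mul_div_comm, ← Complex.exp_add]
  rw [show Complex.I * (a:ℂ) * (L:ℂ) + -Complex.I * (b:ℂ) * (L:ℂ)
      = Complex.I * ((a - b : ℝ):ℂ) * (L:ℂ) by push_cast; ring]
  rw [div_eq_mul_inv]
  push_cast
  ring

/-- For any `x > 0` and any finite sequence of reals `γ₁, …, γ_N`,
`∫_ℝ |∑_j x^{iγ_j}/(1+(t-γ_j)²)|² dt = (π/2) ∑_{j,k} x^{i(γ_j-γ_k)} · 4/(4+(γ_j-γ_k)²)`,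
where `x^{iγ} = e^{iγ log x}`. -/
theorem pair_correlation_integral_identity (x : ℝ) (hx : 0 < x) (N : ℕ) (γ : Fin N → ℝ) :
    ((∫ t : ℝ, ‖∑ j : Fin N,
        Complex.exp (Complex.I * (γ j : ℂ) * (Real.log x : ℂ)) /
          (((1 + (t - γ j) ^ 2 : ℝ)) : ℂ)‖ ^ 2 : ℝ) : ℂ)
      = (π / 2 : ℝ) * ∑ j : Fin N, ∑ k : Fin N,
          Complex.exp (Complex.I * ((γ j - γ k : ℝ) : ℂ) * (Real.log x : ℂ)) *
            ((4 / (4 + (γ j - γ k) ^ 2) : ℝ) : ℂ) := by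
  set L : ℝ := Real.log x with hL
  have hI : ∀ j k : Fin N, Integrable (fun t : ℝ =>
      Complex.exp (Complex.I * ((γ j - γ k : ℝ) : ℂ) * (L : ℂ)) *
        ((((1 + (t - γ j) ^ 2) * (1 + (t - γ k) ^ 2))⁻¹ : ℝ) : ℂ)) := by
    intro j k
    apply Integrable.const_mul
    apply Integrable.ofReal
    have := integrable_aux (γ j - γ k)
    have h2 := this.comp_sub_right (γ k)
    refine h2.congr (ae_of_all _ fun t => ?_)
    show ((1 + (t - γ k - (γ j - γ k)) ^ 2) * (1 + (t - γ k) ^ 2))⁻¹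
        = ((1 + (t - γ j) ^ 2) * (1 + (t - γ k) ^ 2))⁻¹
    rw [show t - γ k - (γ j - γ k) = t - γ j by ring]
  have hpt : ∀ t : ℝ, ((‖∑ j : Fin N,
      Complex.exp (Complex.I * (γ j : ℂ) * (L : ℂ)) /
        (((1 + (t - γ j) ^ 2 : ℝ)) : ℂ)‖ ^ 2 : ℝ) : ℂ)
      = ∑ j : Fin N, ∑ k : Fin N,
        Complex.exp (Complex.I * ((γ j - γ k : ℝ) : ℂ) * (L : ℂ)) *
          ((((1 + (t - γ j) ^ 2) * (1 + (t - γ k) ^ 2))⁻¹ : ℝ) : ℂ) := by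
    intro t
    set S : ℂ := ∑ j : Fin N, Complex.exp (Complex.I * (γ j : ℂ) * (L : ℂ)) /
        (((1 + (t - γ j) ^ 2 : ℝ)) : ℂ) with hS
    have h1 : ((‖S‖ ^ 2 : ℝ) : ℂ) = S * (starRingEnd ℂ) S := by
      rw [Complex.mul_conj, Complex.normSq_eq_norm_sq]
    rw [h1, hS, map_sum, Finset.sum_mul_sum]
    exact Finset.sum_congr rfl fun j _ => Finset.sum_congr rfl fun k _ => term_eq L _ _ t
  rw [show ((∫ t : ℝ, ‖∑ j : Fin N,
        Complex.exp (Complex.I * (γ j : ℂ) * (L : ℂ)) /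
          (((1 + (t - γ j) ^ 2 : ℝ)) : ℂ)‖ ^ 2 : ℝ) : ℂ)
      = ∫ t : ℝ, ((‖∑ j : Fin N,
        Complex.exp (Complex.I * (γ j : ℂ) * (L : ℂ)) /
          (((1 + (t - γ j) ^ 2 : ℝ)) : ℂ)‖ ^ 2 : ℝ) : ℂ)
    from (integral_ofReal (𝕜 := ℂ)).symm]
  calc (∫ t : ℝ, ((‖∑ j : Fin N,
        Complex.exp (Complex.I * (γ j : ℂ) * (L : ℂ)) /
          (((1 + (t - γ j) ^ 2 : ℝ)) : ℂ)‖ ^ 2 : ℝ) : ℂ))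
      = ∫ t : ℝ, ∑ j : Fin N, ∑ k : Fin N,
          Complex.exp (Complex.I * ((γ j - γ k : ℝ) : ℂ) * (L : ℂ)) *
            ((((1 + (t - γ j) ^ 2) * (1 + (t - γ k) ^ 2))⁻¹ : ℝ) : ℂ) := by
        exact integral_congr_ae (ae_of_all _ hpt)
    _ = ∑ j : Fin N, ∑ k : Fin N, ∫ t : ℝ,
          Complex.exp (Complex.I * ((γ j - γ k : ℝ) : ℂ) * (L : ℂ)) *
            ((((1 + (t - γ j) ^ 2) * (1 + (t - γ k) ^ 2))⁻¹ : ℝ) : ℂ) := by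
        rw [integral_finset_sum _ fun j _ => integrable_finset_sum _ fun k _ => hI j k]
        exact Finset.sum_congr rfl fun j _ => integral_finset_sum _ fun k _ => hI j k
    _ = (π / 2 : ℝ) * ∑ j : Fin N, ∑ k : Fin N,
          Complex.exp (Complex.I * ((γ j - γ k : ℝ) : ℂ) * (L : ℂ)) *
            ((4 / (4 + (γ j - γ k) ^ 2) : ℝ) : ℂ) := by
        rw [Finset.mul_sum]
        refine Finset.sum_congr rfl fun j _ => ?_
        rw [Finset.mul_sum]
        refine Finset.sum_congr rfl fun k _ => ?_
        rw [integral_const_mul]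
        have h2 : (∫ t : ℝ, ((((1 + (t - γ j) ^ 2) * (1 + (t - γ k) ^ 2))⁻¹ : ℝ) : ℂ))
            = (((2 * π / (4 + (γ j - γ k) ^ 2)) : ℝ) : ℂ) := by
          rw [← key (γ j) (γ k)]
          exact integral_ofReal (𝕜 := ℂ)
        rw [h2]
        have hD : (4:ℝ) + (γ j - γ k) ^ 2 ≠ 0 := by positivity
        push_cast
        have hD' : (4:ℂ) + ((γ j : ℂ) - (γ k : ℂ)) ^ 2 ≠ 0 := by exact_mod_cast hD
        field_simp
        ring
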